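/- Let d ≥ 2, α > 0, and n a positive integer, and set r = α·n^(1/d) and h = α·n^((1−d)/(d(d+1))). Then there exists a constant c = c(d) > 0 (independent of α and n) and unit-sphere directions v_1, …, v_m ∈ ∂B_r with m ≥ c·n^((d−1)/(d+1)) such that the ball slices S_{v_1}, …, S_{v_m} are pairwise disjoint. -/

import Mathlib

noncomputable section

/-- The ball slice in the open ball `B_r ⊆ ℝ^d` (centered at the origin) with apex `v ∈ ∂B_r`
and height `h`: `S_v = {x ∈ B_r : ⟨x, v⟩ > r(r−h)}`. -/
def ballSlice (d : ℕ) (r h : ℝ) (v : EuclideanSpace ℝ (Fin d)) : Set (EuclideanSpace ℝ (Fin d)) :=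
  {x | ‖x‖ < r ∧ r * (r - h) < (inner ℝ x v : ℝ)}

lemma coord_le_norm {n : ℕ} (x : EuclideanSpace ℝ (Fin n)) (k : Fin n) : |x k| ≤ ‖x‖ := by
  rw [EuclideanSpace.norm_eq, ← Real.sqrt_sq_eq_abs]
  apply Real.sqrt_le_sqrt
  have h := Finset.single_le_sum (f := fun i => ‖x i‖ ^ 2)
    (fun i _ => by positivity) (Finset.mem_univ k)
  simpa [Real.norm_eq_abs, sq_abs] using h

lemma slice_disjoint (d : ℕ) (r h : ℝ) (v w : EuclideanSpace ℝ (Fin d))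
    (hv : ‖v‖ = r) (hw : ‖w‖ = r) (hsep : 2 * Real.sqrt (2 * r * h) ≤ ‖v - w‖) :
    Disjoint (ballSlice d r h v) (ballSlice d r h w) := by
  rw [Set.disjoint_left]
  rintro x ⟨hx1, hx2⟩ ⟨hx3, hx4⟩
  have key : ∀ u : EuclideanSpace ℝ (Fin d), ‖u‖ = r → r * (r - h) < (inner ℝ x u : ℝ) →
      ‖x - u‖ < Real.sqrt (2 * r * h) := by
    intro u hu hiu
    have hexp : ‖x - u‖ ^ 2 = ‖x‖ ^ 2 - 2 * (inner ℝ x u : ℝ) + ‖u‖ ^ 2 :=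
      norm_sub_sq_real x u
    have h1 : ‖x - u‖ ^ 2 < 2 * r * h := by
      nlinarith [norm_nonneg x, norm_nonneg (x - u)]
    have h2 : (0:ℝ) < 2 * r * h := lt_of_le_of_lt (by positivity) h1
    calc ‖x - u‖ = Real.sqrt (‖x - u‖ ^ 2) := (Real.sqrt_sq (norm_nonneg _)).symm
      _ < Real.sqrt (2 * r * h) := Real.sqrt_lt_sqrt (by positivity) h1
  have h1 := key v hv hx2
  have h2 := key w hw hx4
  have h3 : ‖v - w‖ ≤ ‖x - v‖ + ‖x - w‖ := by
    have := dist_triangle v x w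
    simpa [dist_eq_norm, norm_sub_rev] using this
  linarith

lemma packing (d' : ℕ) (r ε : ℝ) (hr : 0 < r) (hε : 0 < ε) :
    ∃ (m : ℕ) (v : Fin m → EuclideanSpace ℝ (Fin (d' + 1))),
      (r / (2 * Real.sqrt ((d' : ℝ) + 1) * ε)) ^ d' ≤ (m : ℝ) ∧
      (∀ i, ‖v i‖ = r) ∧
      ∀ i j, i ≠ j → ε ≤ ‖v i - v j‖ := by
  set t : ℝ := r / (2 * Real.sqrt ((d' : ℝ) + 1) * ε) with ht
  have hs : 0 < Real.sqrt ((d' : ℝ) + 1) := Real.sqrt_pos.2 (by positivity)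
  have ht0 : 0 < t := by positivity
  set M : ℕ := ⌊t⌋₊ + 1 with hM
  have hcard : Fintype.card (Fin d' → Fin M) = M ^ d' := by simp
  let e : Fin (M ^ d') ≃ (Fin d' → Fin M) := (Fintype.equivFinOfCardEq hcard).symm
  -- coordinates
  set a : Fin (M ^ d') → Fin d' → ℝ := fun i k => ε * ((e i k : ℕ) : ℝ) with ha
  set S : Fin (M ^ d') → ℝ := fun i => ∑ k, (a i k) ^ 2 with hS
  -- bound on coordinates
  have hcoord : ∀ i k, 0 ≤ a i k ∧ a i k ≤ r / (2 * Real.sqrt ((d' : ℝ) + 1)) := by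
    intro i k
    constructor
    · positivity
    · have h1 : ((e i k : ℕ) : ℝ) ≤ (⌊t⌋₊ : ℝ) := by
        have := (e i k).2
        exact_mod_cast Nat.lt_succ_iff.1 (by exact_mod_cast this)
      have h2 : (⌊t⌋₊ : ℝ) ≤ t := Nat.floor_le ht0.le
      have h3 : a i k ≤ ε * t := by
        have := mul_le_mul_of_nonneg_left (h1.trans h2) hε.le
        simpa [ha] using this
      have h4 : ε * t = r / (2 * Real.sqrt ((d' : ℝ) + 1)) := by
        rw [ht]; field_simp
      linarith
  have hSle : ∀ i, S i ≤ r ^ 2 := by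
    intro i
    have hsq : (Real.sqrt ((d' : ℝ) + 1)) ^ 2 = (d' : ℝ) + 1 := Real.sq_sqrt (by positivity)
    have h1 : S i ≤ (d' : ℝ) * (r / (2 * Real.sqrt ((d' : ℝ) + 1))) ^ 2 := by
      rw [hS]
      calc ∑ k, (a i k) ^ 2 ≤ ∑ _k : Fin d', (r / (2 * Real.sqrt ((d' : ℝ) + 1))) ^ 2 := by
            apply Finset.sum_le_sum
            intro k _
            have := hcoord i k
            nlinarith [this.1, this.2]
        _ = (d' : ℝ) * (r / (2 * Real.sqrt ((d' : ℝ) + 1))) ^ 2 := by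
            simp [Finset.sum_const, mul_comm]
      -- done
    have h2 : (d' : ℝ) * (r / (2 * Real.sqrt ((d' : ℝ) + 1))) ^ 2 ≤ r ^ 2 := by
      rw [div_pow, mul_pow, hsq]
      have hd1 : (0:ℝ) < 2 ^ 2 * ((d':ℝ) + 1) := by positivity
      have hq : (d' : ℝ) / (2 ^ 2 * ((d':ℝ) + 1)) ≤ 1 := by
        rw [div_le_one hd1]
        have : (0:ℝ) ≤ (d' : ℝ) := Nat.cast_nonneg d'
        nlinarith
      have heq : (d' : ℝ) * (r ^ 2 / (2 ^ 2 * ((d':ℝ) + 1)))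
          = r ^ 2 * ((d' : ℝ) / (2 ^ 2 * ((d':ℝ) + 1))) := by ring
      rw [heq]
      nlinarith [sq_nonneg r]
    linarith
  -- the points
  set v : Fin (M ^ d') → EuclideanSpace ℝ (Fin (d' + 1)) := fun i =>
    (WithLp.equiv 2 (Fin (d' + 1) → ℝ)).symm
      (Fin.snoc (α := fun _ => ℝ) (a i) (Real.sqrt (r ^ 2 - S i))) with hv
  have happly : ∀ i (j : Fin (d' + 1)), v i j = Fin.snoc (α := fun _ => ℝ) (a i) (Real.sqrt (r ^ 2 - S i)) j := by
    intro i j; rfl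
  have hnorm : ∀ i, ‖v i‖ = r := by
    intro i
    rw [EuclideanSpace.norm_eq]
    have : ∑ j : Fin (d' + 1), ‖v i j‖ ^ 2 = S i + (r ^ 2 - S i) := by
      rw [Fin.sum_univ_castSucc]
      congr 1
      · rw [hS]
        apply Finset.sum_congr rfl
        intro k _
        rw [happly, Fin.snoc_castSucc, Real.norm_eq_abs, sq_abs]
      · rw [happly, Fin.snoc_last, Real.norm_eq_abs, sq_abs,
          Real.sq_sqrt (by linarith [hSle i])]
    rw [this]
    simp only [add_sub_cancel]
    exact Real.sqrt_sq hr.le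
  refine ⟨M ^ d', v, ?_, hnorm, ?_⟩
  · have h1 : t < (M : ℝ) := by
      rw [hM]; push_cast; exact Nat.lt_floor_add_one t
    calc t ^ d' ≤ (M : ℝ) ^ d' := pow_le_pow_left₀ ht0.le h1.le d'
      _ = ((M ^ d' : ℕ) : ℝ) := by push_cast; ring
  · intro i j hij
    have hij' : e i ≠ e j := fun hh => hij (e.injective hh)
    obtain ⟨k, hk⟩ := Function.ne_iff.1 hij'
    have hkval : (e i k : ℕ) ≠ (e j k : ℕ) := fun hh => hk (Fin.ext hh)
    have h2 : (1 : ℤ) ≤ |((e i k : ℕ) : ℤ) - ((e j k : ℕ) : ℤ)| := by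
      have hne : ((e i k : ℕ) : ℤ) ≠ ((e j k : ℕ) : ℤ) := by exact_mod_cast hkval
      rcases le_or_gt ((e i k : ℕ) : ℤ) ((e j k : ℕ) : ℤ) with hle | hlt
      · rw [abs_sub_comm, abs_of_nonneg (by omega)]; omega
      · rw [abs_of_nonneg (by omega)]; omega
    have h3 : (1 : ℝ) ≤ |((e i k : ℕ) : ℝ) - ((e j k : ℕ) : ℝ)| := by exact_mod_cast h2
    have h4 : (v i - v j) (Fin.castSucc k) = a i k - a j k := by
      have : (v i - v j) (Fin.castSucc k) = v i (Fin.castSucc k) - v j (Fin.castSucc k) := rfl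
      rw [this, happly, happly, Fin.snoc_castSucc, Fin.snoc_castSucc]
    have h5 : ε ≤ |(v i - v j) (Fin.castSucc k)| := by
      rw [h4, ha]
      have : ε * ((e i k : ℕ) : ℝ) - ε * ((e j k : ℕ) : ℝ)
          = ε * (((e i k : ℕ) : ℝ) - ((e j k : ℕ) : ℝ)) := by ring
      rw [this, abs_mul, abs_of_pos hε]
      nlinarith
    exact h5.trans (coord_le_norm _ _)

theorem stmt3 (d : ℕ) (hd : 2 ≤ d) :
    ∃ c : ℝ, 0 < c ∧
      ∀ α : ℝ, 0 < α → ∀ n : ℕ, 0 < n →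
        ∃ (m : ℕ) (v : Fin m → EuclideanSpace ℝ (Fin d)),
          c * (n : ℝ) ^ (((d : ℝ) - 1) / ((d : ℝ) + 1)) ≤ (m : ℝ) ∧
          (∀ i : Fin m, ‖v i‖ = α * (n : ℝ) ^ ((1 : ℝ) / d)) ∧
          ∀ i j : Fin m, i ≠ j →
            Disjoint
              (ballSlice d (α * (n : ℝ) ^ ((1 : ℝ) / d))
                (α * (n : ℝ) ^ (((1 : ℝ) - d) / ((d : ℝ) * ((d : ℝ) + 1)))) (v i))
              (ballSlice d (α * (n : ℝ) ^ ((1 : ℝ) / d))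
                (α * (n : ℝ) ^ (((1 : ℝ) - d) / ((d : ℝ) * ((d : ℝ) + 1)))) (v j)) := by
  obtain ⟨d', rfl⟩ : ∃ d', d = d' + 1 := ⟨d - 1, by omega⟩
  refine ⟨((4 * Real.sqrt (2 * ((d' : ℝ) + 1)))⁻¹) ^ d', ?_, ?_⟩
  · have h1 : 0 < Real.sqrt (2 * ((d' : ℝ) + 1)) := Real.sqrt_pos.2 (by positivity)
    positivity
  intro α hα n hn
  have hn0 : (0 : ℝ) < n := by exact_mod_cast hn
  set e1 : ℝ := (1 : ℝ) / ((d' + 1 : ℕ) : ℝ) with he1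
  set e2 : ℝ := ((1 : ℝ) - ((d' + 1 : ℕ) : ℝ)) /
      (((d' + 1 : ℕ) : ℝ) * (((d' + 1 : ℕ) : ℝ) + 1)) with he2
  set w : ℝ := (1 : ℝ) / (((d' : ℝ) + 1) * ((d' : ℝ) + 2)) with hw
  set r : ℝ := α * (n : ℝ) ^ e1 with hrdef
  set h : ℝ := α * (n : ℝ) ^ e2 with hhdef
  set ε : ℝ := 2 * Real.sqrt 2 * α * (n : ℝ) ^ w with hεdef
  have hr : 0 < r := mul_pos hα (Real.rpow_pos_of_pos hn0 _)
  have hε : 0 < ε := by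
    have h2 : 0 < Real.sqrt 2 := Real.sqrt_pos.2 (by norm_num)
    have := Real.rpow_pos_of_pos hn0 w
    positivity
  have hD1 : ((d' : ℝ) + 1) ≠ 0 := by positivity
  have hD2 : ((d' : ℝ) + 2) ≠ 0 := by positivity
  -- sqrt(2rh) = √2 * α * n^w
  have hsq : 2 * r * h = (Real.sqrt 2 * α * (n : ℝ) ^ w) ^ 2 := by
    have h2 : (Real.sqrt 2) ^ 2 = 2 := Real.sq_sqrt (by norm_num)
    have hw2 : ((n : ℝ) ^ w) ^ 2 = (n : ℝ) ^ (w * 2) := by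
      rw [← Real.rpow_natCast ((n : ℝ) ^ w) 2, ← Real.rpow_mul hn0.le]
      norm_num
    have hmul : (n : ℝ) ^ e1 * (n : ℝ) ^ e2 = (n : ℝ) ^ (e1 + e2) :=
      (Real.rpow_add hn0 _ _).symm
    have hexp : e1 + e2 = w * 2 := by
      rw [he1, he2, hw]
      push_cast
      field_simp
      ring
    calc 2 * r * h = 2 * α ^ 2 * ((n : ℝ) ^ e1 * (n : ℝ) ^ e2) := by
          rw [hrdef, hhdef]; ring
      _ = 2 * α ^ 2 * (n : ℝ) ^ (w * 2) := by rw [hmul, hexp]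
      _ = (Real.sqrt 2 * α * (n : ℝ) ^ w) ^ 2 := by rw [mul_pow, mul_pow, h2, hw2]
  have hsqrt : Real.sqrt (2 * r * h) = Real.sqrt 2 * α * (n : ℝ) ^ w := by
    rw [hsq, Real.sqrt_sq (by positivity)]
  obtain ⟨m, v, hm, hnorm, hsep⟩ := packing d' r ε hr hε
  have hnormval : ∀ i, ‖v i‖ = α * (n : ℝ) ^ e1 := fun i => hnorm i
  refine ⟨m, v, ?_, hnormval, ?_⟩
  · -- counting
    have htval : r / (2 * Real.sqrt ((d' : ℝ) + 1) * ε)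
        = (4 * Real.sqrt (2 * ((d' : ℝ) + 1)))⁻¹ * (n : ℝ) ^ ((1 : ℝ) / ((d' : ℝ) + 2)) := by
      have hs1 : Real.sqrt ((d' : ℝ) + 1) ≠ 0 := by
        have : 0 < Real.sqrt ((d' : ℝ) + 1) := Real.sqrt_pos.2 (by positivity)
        exact this.ne'
      have hs2 : (Real.sqrt 2 : ℝ) ≠ 0 := by
        have : 0 < Real.sqrt 2 := Real.sqrt_pos.2 (by norm_num)
        exact this.ne'
      have hnw : (n : ℝ) ^ w ≠ 0 := (Real.rpow_pos_of_pos hn0 w).ne'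
      have hediff : (1 : ℝ) / ((d' : ℝ) + 2) = e1 - w := by
        rw [he1, hw]; push_cast; field_simp; ring
      rw [hediff, Real.rpow_sub hn0, hrdef, hεdef,
        Real.sqrt_mul (by norm_num : (0:ℝ) ≤ 2)]
      field_simp
      ring
    have hmono : ((4 * Real.sqrt (2 * ((d' : ℝ) + 1)))⁻¹) ^ d'
        * (n : ℝ) ^ ((((d' + 1 : ℕ) : ℝ) - 1) / (((d' + 1 : ℕ) : ℝ) + 1))
        = (r / (2 * Real.sqrt ((d' : ℝ) + 1) * ε)) ^ d' := by
      rw [htval, mul_pow]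
      congr 1
      rw [← Real.rpow_natCast ((n : ℝ) ^ ((1 : ℝ) / ((d' : ℝ) + 2))) d',
        ← Real.rpow_mul hn0.le]
      congr 1
      push_cast
      field_simp
      ring
    rw [hmono]
    exact hm
  · intro i j hij
    refine slice_disjoint (d' + 1) r h (v i) (v j) (hnorm i) (hnorm j) ?_
    have h1 := hsep i j hij
    rw [hsqrt]
    have : ε = 2 * (Real.sqrt 2 * α * (n : ℝ) ^ w) := by rw [hεdef]; ring
    linarith
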